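/- With the setup of the previous statement and additionally assuming L/K Galois with all Galois conjugation structure constants b^g_k in O_v (where g(ω_i) = Σ_k b^g_k ω_k) and the coordinates c_k of 1 in O_v: the level set K_v := {x ∈ (L ⊗ K_v)^* / K_v^* : H'_v(x) = 1} is a subgroup of the unit group, i.e., it contains the identity and is closed under multiplication and inversion. -/

import Mathlib

/-- With `L/K` Galois of degree `d` with basis `ω_0, ..., ω_{d-1}`, `v` a non-archimedean
absolute value on `K` with all multiplication structure constants, Galois conjugation
structure constants, and the coordinates of `1` being `v`-integral, the level set
`{x : H'_v(x) = 1}` is a subgroup: it contains the identity and is closed under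
multiplication and inversion. Here `H'_v(X) = (max_k |X_k|_v)^d / |N_{L/K}(X)|_v` in
terms of the coordinates `X_k` of `X` with respect to the basis. -/
theorem stmt14 {K L : Type*} [Field K] [Field L] [Algebra K L] [IsGalois K L]
    (d : ℕ) (hd : 0 < d) (b : Module.Basis (Fin d) K L)
    (v : AbsoluteValue K ℝ)
    (hna : ∀ a c : K, v (a + c) ≤ max (v a) (v c))
    (hstr : ∀ i j k : Fin d, v (b.repr (b i * b j) k) ≤ 1)
    (hgal : ∀ (g : L ≃ₐ[K] L) (i k : Fin d), v (b.repr (g (b i)) k) ≤ 1)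
    (hone : ∀ k : Fin d, v (b.repr 1 k) ≤ 1)
    (H' : L → ℝ)
    (hH' : ∀ X : L, H' X =
      (Finset.univ.sup' (Finset.univ_nonempty_iff.mpr ⟨⟨0, hd⟩⟩)
        (fun k => v (b.repr X k))) ^ d / v (Algebra.norm K X)) :
    H' 1 = 1 ∧
    (∀ X Y : L, X ≠ 0 → Y ≠ 0 → H' X = 1 → H' Y = 1 → H' (X * Y) = 1) ∧
    (∀ X : L, X ≠ 0 → H' X = 1 → H' X⁻¹ = 1) := by
  classical
  haveI : FiniteDimensional K L := Module.Basis.finiteDimensional_of_finite b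
  obtain ⟨e, rfl⟩ : ∃ e, d = e + 1 := ⟨d - 1, (Nat.succ_pred_eq_of_pos hd).symm⟩
  have hne : (Finset.univ : Finset (Fin (e + 1))).Nonempty :=
    Finset.univ_nonempty_iff.mpr ⟨⟨0, hd⟩⟩
  set M : L → ℝ := fun X => Finset.univ.sup' hne (fun k => v (b.repr X k)) with hM
  have hH : ∀ X : L, H' X = M X ^ (e + 1) / v (Algebra.norm K X) := hH'
  -- nonarchimedean sum bound
  have hsum : ∀ (s : Finset (Fin (e + 1))) (f : Fin (e + 1) → K) (B : ℝ), 0 ≤ B →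
      (∀ i ∈ s, v (f i) ≤ B) → v (∑ i ∈ s, f i) ≤ B := by
    intro s
    induction s using Finset.induction with
    | empty => intro f B hB _; simpa using hB
    | insert _ _ hnot ih =>
      intro f B hB hf
      rw [Finset.sum_insert hnot]
      refine le_trans (hna _ (∑ i ∈ _, f i)) (max_le (hf _ (Finset.mem_insert_self _ _)) ?_)
      exact ih f B hB fun i hi => hf i (Finset.mem_insert_of_mem hi)
  have hMle : ∀ (X : L) (k : Fin (e + 1)), v (b.repr X k) ≤ M X := by
    intro X k; exact Finset.le_sup' (fun k => v (b.repr X k)) (Finset.mem_univ k)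
  have hM0 : ∀ X : L, 0 ≤ M X := by
    intro X; exact le_trans (v.nonneg _) (hMle X ⟨0, hd⟩)
  have hMpos : ∀ X : L, X ≠ 0 → 0 < M X := by
    intro X hX
    rcases lt_or_eq_of_le (hM0 X) with h | h
    · exact h
    · exfalso
      apply hX
      have hz : ∀ k, b.repr X k = 0 := by
        intro k
        exact v.eq_zero.mp (le_antisymm (le_trans (hMle X k) h.ge) (v.nonneg _))
      rw [← b.sum_repr X]
      simp [hz]
  have hMsmul : ∀ (c : K) (X : L), M (c • X) = v c * M X := by
    intro c X
    have hco : ∀ k, b.repr (c • X) k = c * b.repr X k := by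
      intro k; rw [map_smul]; rfl
    apply le_antisymm
    · apply Finset.sup'_le
      intro k _
      rw [hco, map_mul]
      exact mul_le_mul_of_nonneg_left (hMle X k) (v.nonneg c)
    · obtain ⟨k0, _, hk0⟩ := Finset.exists_mem_eq_sup' hne (fun k => v (b.repr X k))
      have h0 : M X = v (b.repr X k0) := hk0
      rw [h0, ← map_mul, ← hco]
      exact hMle _ k0
  have hMmul : ∀ X Y : L, M (X * Y) ≤ M X * M Y := by
    intro X Y
    have hMXY : 0 ≤ M X * M Y := mul_nonneg (hM0 X) (hM0 Y)
    have hxy : X * Y = ∑ i : Fin (e+1), ∑ j : Fin (e+1),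
        (b.repr X i * b.repr Y j) • (b i * b j) := by
      conv_lhs => rw [← b.sum_repr X, ← b.sum_repr Y]
      rw [Finset.sum_mul_sum]
      simp_rw [smul_mul_smul_comm]
    apply Finset.sup'_le
    intro k _
    have hrep : b.repr (X * Y) k =
        ∑ i : Fin (e+1), ∑ j : Fin (e+1),
          b.repr X i * b.repr Y j * b.repr (b i * b j) k := by
      rw [hxy, map_sum]
      simp only [map_sum, map_smul, Finset.sum_apply', Finsupp.smul_apply, smul_eq_mul]
    rw [hrep]
    apply hsum _ _ _ hMXY
    intro i _
    apply hsum _ _ _ hMXY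
    intro j _
    rw [map_mul, map_mul]
    calc v (b.repr X i) * v (b.repr Y j) * v (b.repr (b i * b j) k)
        ≤ M X * M Y * 1 :=
          mul_le_mul (mul_le_mul (hMle X i) (hMle Y j) (v.nonneg _) (hM0 X))
            (hstr i j k) (v.nonneg _) hMXY
      _ = M X * M Y := mul_one _
  have hMconj : ∀ (g : L ≃ₐ[K] L) (X : L), M (g X) ≤ M X := by
    intro g X
    have hgx : g X = ∑ i : Fin (e+1), b.repr X i • g (b i) := by
      conv_lhs => rw [← b.sum_repr X]
      rw [map_sum]
      simp_rw [map_smul]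
    apply Finset.sup'_le
    intro k _
    have hrep : b.repr (g X) k =
        ∑ i : Fin (e+1), b.repr X i * b.repr (g (b i)) k := by
      rw [hgx, map_sum]
      simp only [map_smul, Finset.sum_apply', Finsupp.smul_apply, smul_eq_mul]
    rw [hrep]
    apply hsum _ _ _ (hM0 X)
    intro i _
    rw [map_mul]
    calc v (b.repr X i) * v (b.repr (g (b i)) k) ≤ M X * 1 :=
          mul_le_mul (hMle X i) (hgal g i k) (v.nonneg _) (hM0 X)
      _ = M X := mul_one _
  have hM1 : M 1 = 1 := by
    have hle : M 1 ≤ 1 := Finset.sup'_le _ _ fun k _ => hone k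
    have hpos : 0 < M 1 := hMpos 1 one_ne_zero
    have hsq : M 1 ≤ M 1 * M 1 := by
      have := hMmul 1 1; rwa [mul_one] at this
    nlinarith
  have hMprod : ∀ (s : Finset (L ≃ₐ[K] L)) (f : (L ≃ₐ[K] L) → L),
      M (∏ g ∈ s, f g) ≤ ∏ g ∈ s, M (f g) := by
    intro s
    induction s using Finset.induction with
    | empty => intro f; simp [hM1]
    | insert _ _ hnot ih =>
      intro f
      rw [Finset.prod_insert hnot, Finset.prod_insert hnot]
      refine le_trans (hMmul _ _) ?_
      exact mul_le_mul_of_nonneg_left (ih f) (hM0 _)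
  have hcard : Fintype.card (L ≃ₐ[K] L) = e + 1 := by
    rw [← Nat.card_eq_fintype_card, IsGalois.card_aut_eq_finrank, Module.finrank_eq_card_basis b,
      Fintype.card_fin]
  have hMalg : ∀ c : K, M (algebraMap K L c) = v c := by
    intro c
    rw [Algebra.algebraMap_eq_smul_one, hMsmul, hM1, mul_one]
  have hnorm_le : ∀ X : L, v (Algebra.norm K X) ≤ M X ^ (e + 1) := by
    intro X
    calc v (Algebra.norm K X) = M (algebraMap K L (Algebra.norm K X)) := (hMalg _).symm
      _ = M (∏ σ : L ≃ₐ[K] L, σ X) := by rw [Algebra.norm_eq_prod_automorphisms]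
      _ ≤ ∏ σ : L ≃ₐ[K] L, M (σ X) := hMprod _ _
      _ ≤ ∏ _σ : L ≃ₐ[K] L, M X :=
          Finset.prod_le_prod (fun σ _ => hM0 _) (fun σ _ => hMconj σ X)
      _ = M X ^ (e + 1) := by
          rw [Finset.prod_const, Finset.card_univ, hcard]
  have hnormne : ∀ X : L, X ≠ 0 → Algebra.norm K X ≠ 0 := by
    intro X hX
    have h1 : Algebra.norm K X * Algebra.norm K X⁻¹ = 1 := by
      rw [← map_mul, mul_inv_cancel₀ hX, map_one]
    exact left_ne_zero_of_mul_eq_one h1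
  have hge1 : ∀ X : L, X ≠ 0 → 1 ≤ H' X := by
    intro X hX
    rw [hH]
    rw [one_le_div (v.pos (hnormne X hX))]
    exact hnorm_le X
  have hkey : ∀ X : L, X ≠ 0 → H' X = 1 → v (Algebra.norm K X) = M X ^ (e + 1) := by
    intro X hX h1
    rw [hH] at h1
    exact ((div_eq_one_iff_eq (ne_of_gt (v.pos (hnormne X hX)))).mp h1).symm
  refine ⟨?_, ?_, ?_⟩
  · rw [hH, hM1, one_pow]
    simp
  · intro X Y hX hY h1 h2
    refine le_antisymm ?_ (hge1 _ (mul_ne_zero hX hY))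
    rw [hH, map_mul, map_mul, hkey X hX h1, hkey Y hY h2,
      div_le_one (mul_pos (pow_pos (hMpos X hX) _) (pow_pos (hMpos Y hY) _))]
    calc M (X * Y) ^ (e + 1) ≤ (M X * M Y) ^ (e + 1) :=
          pow_le_pow_left₀ (hM0 _) (hMmul X Y) _
      _ = M X ^ (e + 1) * M Y ^ (e + 1) := mul_pow _ _ _
  · intro X hX h1
    have hX' : X⁻¹ ≠ 0 := inv_ne_zero hX
    refine le_antisymm ?_ (hge1 _ hX')
    have hn : Algebra.norm K X ≠ 0 := hnormne X hX
    have hvn : v (Algebra.norm K X) = M X ^ (e + 1) := hkey X hX h1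
    have hMXpos : 0 < M X := hMpos X hX
    have hninv : Algebra.norm K X⁻¹ = (Algebra.norm K X)⁻¹ := by
      have h2 : Algebra.norm K X * Algebra.norm K X⁻¹ = 1 := by
        rw [← map_mul, mul_inv_cancel₀ hX, map_one]
      exact eq_inv_of_mul_eq_one_left (by rw [mul_comm] at h2; exact h2)
    have hfac : algebraMap K L (Algebra.norm K X) =
        X * ∏ σ ∈ Finset.univ.erase (1 : L ≃ₐ[K] L), σ X := by
      rw [Algebra.norm_eq_prod_automorphisms,
        ← Finset.mul_prod_erase Finset.univ _ (Finset.mem_univ (1 : L ≃ₐ[K] L))]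
      rfl
    have hXinv : X⁻¹ = (Algebra.norm K X)⁻¹ •
        ∏ σ ∈ Finset.univ.erase (1 : L ≃ₐ[K] L), σ X := by
      have hmul : X * ((Algebra.norm K X)⁻¹ •
          ∏ σ ∈ Finset.univ.erase (1 : L ≃ₐ[K] L), σ X) = 1 := by
        rw [mul_smul_comm, ← hfac, Algebra.algebraMap_eq_smul_one, smul_smul,
          inv_mul_cancel₀ hn, one_smul]
      exact (inv_eq_of_mul_eq_one_right hmul)
    have hbound : M X⁻¹ ≤ (M X)⁻¹ := by
      rw [hXinv, hMsmul, map_inv₀, hvn]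
      have hprod : M (∏ σ ∈ Finset.univ.erase (1 : L ≃ₐ[K] L), σ X) ≤ M X ^ e := by
        refine le_trans (hMprod _ _) ?_
        calc ∏ σ ∈ Finset.univ.erase (1 : L ≃ₐ[K] L), M (σ X)
            ≤ ∏ _σ ∈ Finset.univ.erase (1 : L ≃ₐ[K] L), M X :=
              Finset.prod_le_prod (fun σ _ => hM0 _) (fun σ _ => hMconj σ X)
          _ = M X ^ e := by
              rw [Finset.prod_const, Finset.card_erase_of_mem (Finset.mem_univ _),
                Finset.card_univ, hcard, Nat.add_sub_cancel]
      calc (M X ^ (e + 1))⁻¹ * M (∏ σ ∈ Finset.univ.erase (1 : L ≃ₐ[K] L), σ X)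
          ≤ (M X ^ (e + 1))⁻¹ * M X ^ e := by
            exact mul_le_mul_of_nonneg_left hprod (by positivity)
        _ = (M X)⁻¹ := by
            rw [pow_succ]
            field_simp
    calc H' X⁻¹ = M X⁻¹ ^ (e + 1) / (v (Algebra.norm K X))⁻¹ := by
          rw [hH, hninv, map_inv₀]
      _ = M X⁻¹ ^ (e + 1) * v (Algebra.norm K X) := by rw [division_def, inv_inv]
      _ ≤ (M X)⁻¹ ^ (e + 1) * v (Algebra.norm K X) :=
          mul_le_mul_of_nonneg_right (pow_le_pow_left₀ (hM0 _) hbound _) (v.nonneg _)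
      _ = 1 := by
          rw [hvn, inv_pow, inv_mul_cancel₀ (pow_ne_zero _ (ne_of_gt hMXpos))]
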